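/- Let s ≥ 2 be an integer and define r_0(h) = e^h, r_{n+1}(h) = (r_n(h)^s + s - 1)/s. Then the annealed free energy F(h) := lim_{n→∞} s^{-n} log r_n(h) exists for all h ∈ ℝ, and F(h) = 0 for h ≤ 0 while F(h) > 0 for h > 0. -/

import Mathlib

open Filter Real

/-- Key inequality: for `s ≥ 2` and `u ≥ 0`, `(1+u)^s ≥ 1 + s·u + u²`. -/
lemma key_ineq_aux (s : ℕ) (hs : 2 ≤ s) (u : ℝ) (hu : 0 ≤ u) :
    1 + (s : ℝ) * u + u ^ 2 ≤ (1 + u) ^ s := by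
  obtain ⟨k, rfl⟩ : ∃ k, s = k + 2 := ⟨s - 2, by omega⟩
  have hb : 1 + (k : ℝ) * u ≤ (1 + u) ^ k :=
    one_add_mul_le_pow (by linarith) k
  have h2 : (0:ℝ) ≤ (1 + u) ^ 2 := by positivity
  calc 1 + ((k + 2 : ℕ) : ℝ) * u + u ^ 2
      ≤ (1 + (k : ℝ) * u) * (1 + u) ^ 2 := by
        push_cast
        nlinarith [mul_nonneg (Nat.cast_nonneg (α := ℝ) k) (mul_nonneg hu hu),
          mul_nonneg (Nat.cast_nonneg (α := ℝ) k) hu]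
    _ ≤ (1 + u) ^ k * (1 + u) ^ 2 := by
        apply mul_le_mul_of_nonneg_right hb h2
    _ = (1 + u) ^ (k + 2) := by rw [← pow_add]

/-- Bernoulli: for `x ≥ 0`, `x^s ≥ 1 + s(x-1)`. -/
lemma bernoulli_aux (s : ℕ) (x : ℝ) (hx : 0 ≤ x) :
    1 + (s : ℝ) * (x - 1) ≤ x ^ s := by
  have := one_add_mul_le_pow (a := x - 1) (by linarith) s
  simpa [mul_comm] using this

theorem stmt_8 (s : ℕ) (hs : 2 ≤ s) (r : ℝ → ℕ → ℝ)
    (hr0 : ∀ h, r h 0 = Real.exp h)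
    (hrec : ∀ h n, r h (n+1) = (r h n ^ s + s - 1) / s) :
    ∃ F : ℝ → ℝ,
      (∀ h, Filter.Tendsto (fun n : ℕ => ((s : ℝ) ^ n)⁻¹ * Real.log (r h n))
        Filter.atTop (nhds (F h))) ∧
      (∀ h ≤ 0, F h = 0) ∧ (∀ h > 0, 0 < F h) := by
  have hs1 : (1:ℝ) < (s:ℝ) := by exact_mod_cast lt_of_lt_of_le one_lt_two (by exact_mod_cast hs)
  have hs0 : (0:ℝ) < (s:ℝ) := by linarith
  set S : ℝ := (s : ℝ) with hS
  -- positivity of r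
  have hpos : ∀ h n, 0 < r h n := by
    intro h n
    induction n with
    | zero => rw [hr0]; exact Real.exp_pos h
    | succ n ih =>
      rw [hrec]
      have : 0 < r h n ^ s := pow_pos ih s
      apply div_pos (by linarith) hs0
  -- monotonicity of r in n
  have hmono : ∀ h n, r h n ≤ r h (n+1) := by
    intro h n
    rw [hrec]
    have hb := bernoulli_aux s (r h n) (hpos h n).le
    rw [le_div_iff₀ hs0]
    nlinarith
  have hmono' : ∀ h, Monotone (r h) := fun h => monotone_nat_of_le_succ (hmono h)
  -- abbreviation
  set a : ℝ → ℕ → ℝ := fun h n => ((s : ℝ) ^ n)⁻¹ * Real.log (r h n) with ha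
  -- lower bound r h n ≥ exp h
  have hge : ∀ h n, Real.exp h ≤ r h n := by
    intro h n
    have := hmono' h (Nat.zero_le n)
    rwa [hr0] at this
  refine ⟨fun h => if h ≤ 0 then 0 else ⨅ n, a h n, ?_, ?_, ?_⟩
  · -- tendsto
    intro h
    by_cases hh : h ≤ 0
    · -- squeeze between h * (S⁻¹)^n and 0
      simp only [if_pos hh]
      have hle1 : ∀ n, r h n ≤ 1 := by
        intro n
        induction n with
        | zero => rw [hr0]; exact Real.exp_le_one_iff.2 hh
        | succ n ih =>
          rw [hrec, div_le_one hs0]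
          have h1 : r h n ^ s ≤ 1 := pow_le_one₀ (hpos h n).le ih
          linarith
      have hlow : ∀ n, h * (S⁻¹) ^ n ≤ a h n := by
        intro n
        have hl : h ≤ Real.log (r h n) := by
          have := Real.log_le_log (Real.exp_pos h) (hge h n)
          rwa [Real.log_exp] at this
        have hp : (0:ℝ) < (S ^ n)⁻¹ := by positivity
        calc h * (S⁻¹) ^ n = (S ^ n)⁻¹ * h := by rw [inv_pow]; ring
          _ ≤ (S ^ n)⁻¹ * Real.log (r h n) := by
              exact mul_le_mul_of_nonneg_left hl hp.le
      have hup : ∀ n, a h n ≤ 0 := by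
        intro n
        have : Real.log (r h n) ≤ 0 := Real.log_nonpos (hpos h n).le (hle1 n)
        have hp : (0:ℝ) ≤ (S ^ n)⁻¹ := by positivity
        exact mul_nonpos_of_nonneg_of_nonpos hp this
      have hlim : Tendsto (fun n : ℕ => h * (S⁻¹) ^ n) atTop (nhds 0) := by
        have : Tendsto (fun n : ℕ => (S⁻¹) ^ n) atTop (nhds 0) := by
          apply tendsto_pow_atTop_nhds_zero_of_lt_one
          · positivity
          · rw [inv_lt_one_iff₀]; right; exact hs1
        simpa using this.const_mul h
      exact tendsto_of_tendsto_of_tendsto_of_le_of_le hlim tendsto_const_nhds hlow hup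
    · -- h > 0 : antitone, bounded below
      push_neg at hh
      simp only [if_neg (not_le.2 hh)]
      -- r h n ≥ exp h > 1
      have hgt1 : ∀ n, 1 < r h n := fun n =>
        lt_of_lt_of_le (Real.one_lt_exp_iff.2 hh) (hge h n)
      -- antitone
      have hanti : Antitone (a h) := by
        apply antitone_nat_of_succ_le
        intro n
        have h1 : r h (n+1) ≤ r h n ^ s := by
          rw [hrec, div_le_iff₀ hs0]
          have : 1 ≤ r h n ^ s := one_le_pow₀ (hgt1 n).le
          nlinarith
        have h2 : Real.log (r h (n+1)) ≤ (s:ℝ) * Real.log (r h n) := by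
          have := Real.log_le_log (hpos h (n+1)) h1
          rwa [Real.log_pow] at this
        show (S ^ (n+1))⁻¹ * Real.log (r h (n+1)) ≤ (S ^ n)⁻¹ * Real.log (r h n)
        have hp : (0:ℝ) < (S ^ (n+1))⁻¹ := by positivity
        calc (S ^ (n+1))⁻¹ * Real.log (r h (n+1))
            ≤ (S ^ (n+1))⁻¹ * (S * Real.log (r h n)) :=
              mul_le_mul_of_nonneg_left h2 hp.le
          _ = (S ^ n)⁻¹ * Real.log (r h n) := by
              rw [pow_succ]
              field_simp
        -- lower step : a h (n+1) ≥ a h n - log S * (S⁻¹)^(n+1)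
      have hstep : ∀ n, a h n - Real.log S * (S⁻¹) ^ (n+1) ≤ a h (n+1) := by
        intro n
        have h1 : r h n ^ s / S ≤ r h (n+1) := by
          rw [hrec]
          apply div_le_div_of_nonneg_right ?_ hs0.le
          linarith
        have h2 : (s:ℝ) * Real.log (r h n) - Real.log S ≤ Real.log (r h (n+1)) := by
          have hq : (0:ℝ) < r h n ^ s / S := div_pos (pow_pos (hpos h n) s) hs0
          have := Real.log_le_log hq h1
          rwa [Real.log_div (pow_pos (hpos h n) s).ne' hs0.ne', Real.log_pow] at this
        show a h n - Real.log S * (S⁻¹) ^ (n+1) ≤ (S ^ (n+1))⁻¹ * Real.log (r h (n+1))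
        have hp : (0:ℝ) < (S ^ (n+1))⁻¹ := by positivity
        calc a h n - Real.log S * (S⁻¹) ^ (n+1)
            = (S ^ (n+1))⁻¹ * ((s:ℝ) * Real.log (r h n) - Real.log S) := by
              show (S ^ n)⁻¹ * Real.log (r h n) - _ = _
              rw [inv_pow, pow_succ]
              field_simp
              ring
          _ ≤ (S ^ (n+1))⁻¹ * Real.log (r h (n+1)) :=
              mul_le_mul_of_nonneg_left h2 hp.le
      -- telescoped lower bound: for all N m, a h (N+m) ≥ a h N - log S * (S⁻¹)^N / (S-1)
      have hLS : 0 ≤ Real.log S := Real.log_nonneg hs1.le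
      have htel : ∀ N m, a h N - Real.log S * (S⁻¹) ^ N * ((1 - (S⁻¹) ^ m) / (S - 1))
          ≤ a h (N + m) := by
        intro N m
        induction m with
        | zero => simp
        | succ m ih =>
          have step := hstep (N + m)
          have key : (1 - (S⁻¹) ^ (m+1)) / (S - 1)
              = (1 - (S⁻¹) ^ m) / (S - 1) + (S⁻¹) ^ (m+1) := by
            have hSne : S ≠ 0 := ne_of_gt hs0
            have hS1ne : S - 1 ≠ 0 := by intro hc; rw [sub_eq_zero] at hc; exact absurd hc.symm (ne_of_lt hs1)
            field_simp
            ring_nf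
            rw [mul_inv_cancel₀ hSne]
            ring
          have hnn : 0 ≤ Real.log S * (S⁻¹) ^ N := by positivity
          have : a h N - Real.log S * (S⁻¹) ^ N * ((1 - (S⁻¹) ^ (m+1)) / (S - 1))
              = a h N - Real.log S * (S⁻¹) ^ N * ((1 - (S⁻¹) ^ m) / (S - 1))
                - Real.log S * (S⁻¹) ^ N * (S⁻¹) ^ (m+1) := by
            rw [key]; ring
          rw [show N + (m+1) = (N + m) + 1 from rfl]
          have hps : Real.log S * (S⁻¹) ^ N * (S⁻¹) ^ (m+1)
              = Real.log S * (S⁻¹) ^ (N + m + 1) := by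
            rw [show N + m + 1 = N + (m+1) from rfl, pow_add]; ring
          calc a h N - Real.log S * (S⁻¹) ^ N * ((1 - (S⁻¹) ^ (m+1)) / (S - 1))
              = (a h N - Real.log S * (S⁻¹) ^ N * ((1 - (S⁻¹) ^ m) / (S - 1)))
                - Real.log S * (S⁻¹) ^ (N + m + 1) := by rw [this, hps]
            _ ≤ a h (N + m) - Real.log S * (S⁻¹) ^ (N + m + 1) := by linarith
            _ ≤ a h ((N + m) + 1) := step
      have htel' : ∀ N m, a h N - Real.log S * (S⁻¹) ^ N / (S - 1) ≤ a h (N + m) := by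
        intro N m
        refine le_trans ?_ (htel N m)
        have h1 : (1 - (S⁻¹) ^ m) / (S - 1) ≤ 1 / (S - 1) := by
          apply div_le_div_of_nonneg_right ?_ (by linarith)
          have : (0:ℝ) ≤ (S⁻¹) ^ m := by positivity
          linarith
        have hnn : 0 ≤ Real.log S * (S⁻¹) ^ N := by positivity
        have := mul_le_mul_of_nonneg_left h1 hnn
        calc a h N - Real.log S * (S⁻¹) ^ N / (S - 1)
            = a h N - Real.log S * (S⁻¹) ^ N * (1 / (S - 1)) := by ring
          _ ≤ a h N - Real.log S * (S⁻¹) ^ N * ((1 - (S⁻¹) ^ m) / (S - 1)) := by linarith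
      -- bounded below (any N works, take N = 0)
      have hbdd : BddBelow (Set.range (a h)) := by
        refine ⟨a h 0 - Real.log S * (S⁻¹) ^ 0 / (S - 1), ?_⟩
        rintro x ⟨n, rfl⟩
        simpa using htel' 0 n
      exact tendsto_atTop_ciInf hanti hbdd
  · intro h hh; simp [if_pos hh]
  · -- positivity of F for h > 0
    intro h hh
    simp only [if_neg (not_le.2 hh)]
    -- linear growth of r
    have hu0 : 0 < Real.exp h - 1 := by
      have := Real.one_lt_exp_iff.2 hh
      linarith
    set u0 : ℝ := Real.exp h - 1 with hu0def
    have hgrow : ∀ n, 1 + u0 + n * (u0 ^ 2 / S) ≤ r h n := by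
      intro n
      induction n with
      | zero => rw [hr0]; simp [hu0def]
      | succ n ih =>
        have hx1 : 1 ≤ r h n := by
          have : (0:ℝ) ≤ (n:ℝ) * (u0 ^ 2 / S) := by positivity
          linarith
        have hkey := key_ineq_aux s hs (r h n - 1) (by linarith)
        rw [show (1 + (r h n - 1)) = r h n by ring] at hkey
        -- r h (n+1) ≥ r h n + (r h n - 1)^2 / S
        have h1 : r h n + (r h n - 1) ^ 2 / S ≤ r h (n+1) := by
          rw [hrec, le_div_iff₀ hs0]
          have : ((r h n + (r h n - 1) ^ 2 / S)) * S
              = r h n * S + (r h n - 1) ^ 2 := by field_simp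
          rw [this]
          nlinarith
        have hu0le : u0 ≤ r h n - 1 := by
          have : (0:ℝ) ≤ (n:ℝ) * (u0 ^ 2 / S) := by positivity
          linarith
        have h2 : u0 ^ 2 / S ≤ (r h n - 1) ^ 2 / S := by
          apply div_le_div_of_nonneg_right ?_ hs0.le
          apply pow_le_pow_left₀ hu0.le hu0le
        push_cast
        nlinarith
    -- choose N with log (r h N) > log S / (S - 1)
    have hK : ∃ N : ℕ, Real.exp (Real.log S / (S - 1)) < r h N := by
      obtain ⟨N, hN⟩ := exists_nat_gt (Real.exp (Real.log S / (S - 1)) / (u0 ^ 2 / S))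
      refine ⟨N, ?_⟩
      have hq : (0:ℝ) < u0 ^ 2 / S := by positivity
      have := (div_lt_iff₀ hq).mp hN
      calc Real.exp (Real.log S / (S - 1)) < N * (u0 ^ 2 / S) := this
        _ ≤ 1 + u0 + N * (u0 ^ 2 / S) := by linarith
        _ ≤ r h N := hgrow N
    obtain ⟨N, hN⟩ := hK
    have hlogN : Real.log S / (S - 1) < Real.log (r h N) := by
      have := Real.log_lt_log (Real.exp_pos _) hN
      rwa [Real.log_exp] at this
    -- c := a h N - log S * (S⁻¹)^N / (S-1) > 0 and a h n ≥ c for all n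
    set c : ℝ := a h N - Real.log S * (S⁻¹) ^ N / (S - 1) with hc
    have hcpos : 0 < c := by
      have hpn : (0:ℝ) < (S ^ N)⁻¹ := by positivity
      have : c = (S ^ N)⁻¹ * (Real.log (r h N) - Real.log S / (S - 1)) := by
        rw [hc]
        show (S ^ N)⁻¹ * Real.log (r h N) - _ = _
        rw [inv_pow]
        ring
      rw [this]
      exact mul_pos hpn (by linarith)
    -- antitone again (reprove locally)
    have hgt1 : ∀ n, 1 < r h n := by
      intro n
      have := hgrow n
      have hn : (0:ℝ) ≤ (n:ℝ) * (u0 ^ 2 / S) := by positivity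
      linarith
    have hanti : Antitone (a h) := by
      apply antitone_nat_of_succ_le
      intro n
      have h1 : r h (n+1) ≤ r h n ^ s := by
        rw [hrec, div_le_iff₀ hs0]
        have : 1 ≤ r h n ^ s := one_le_pow₀ (hgt1 n).le
        nlinarith
      have h2 : Real.log (r h (n+1)) ≤ (s:ℝ) * Real.log (r h n) := by
        have := Real.log_le_log (hpos h (n+1)) h1
        rwa [Real.log_pow] at this
      show (S ^ (n+1))⁻¹ * Real.log (r h (n+1)) ≤ (S ^ n)⁻¹ * Real.log (r h n)
      have hp : (0:ℝ) < (S ^ (n+1))⁻¹ := by positivity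
      calc (S ^ (n+1))⁻¹ * Real.log (r h (n+1))
          ≤ (S ^ (n+1))⁻¹ * (S * Real.log (r h n)) :=
            mul_le_mul_of_nonneg_left h2 hp.le
        _ = (S ^ n)⁻¹ * Real.log (r h n) := by
            rw [pow_succ]
            field_simp
    -- lower step, reproved locally
    have hstep : ∀ n, a h n - Real.log S * (S⁻¹) ^ (n+1) ≤ a h (n+1) := by
      intro n
      have h1 : r h n ^ s / S ≤ r h (n+1) := by
        rw [hrec]
        apply div_le_div_of_nonneg_right ?_ hs0.le
        linarith
      have h2 : (s:ℝ) * Real.log (r h n) - Real.log S ≤ Real.log (r h (n+1)) := by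
        have hq : (0:ℝ) < r h n ^ s / S := div_pos (pow_pos (hpos h n) s) hs0
        have := Real.log_le_log hq h1
        rwa [Real.log_div (pow_pos (hpos h n) s).ne' hs0.ne', Real.log_pow] at this
      show a h n - Real.log S * (S⁻¹) ^ (n+1) ≤ (S ^ (n+1))⁻¹ * Real.log (r h (n+1))
      have hp : (0:ℝ) < (S ^ (n+1))⁻¹ := by positivity
      calc a h n - Real.log S * (S⁻¹) ^ (n+1)
          = (S ^ (n+1))⁻¹ * ((s:ℝ) * Real.log (r h n) - Real.log S) := by
            show (S ^ n)⁻¹ * Real.log (r h n) - _ = _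
            rw [inv_pow, pow_succ]
            field_simp
            ring
        _ ≤ (S ^ (n+1))⁻¹ * Real.log (r h (n+1)) :=
            mul_le_mul_of_nonneg_left h2 hp.le
    have hLS : 0 ≤ Real.log S := Real.log_nonneg hs1.le
    have htel : ∀ M m, a h M - Real.log S * (S⁻¹) ^ M * ((1 - (S⁻¹) ^ m) / (S - 1))
        ≤ a h (M + m) := by
      intro M m
      induction m with
      | zero => simp
      | succ m ih =>
        have step := hstep (M + m)
        have key : (1 - (S⁻¹) ^ (m+1)) / (S - 1)
            = (1 - (S⁻¹) ^ m) / (S - 1) + (S⁻¹) ^ (m+1) := by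
          have hSne : S ≠ 0 := ne_of_gt hs0
          have hS1ne : S - 1 ≠ 0 := by intro hcc; rw [sub_eq_zero] at hcc; exact absurd hcc.symm (ne_of_lt hs1)
          field_simp
          ring_nf
          rw [mul_inv_cancel₀ hSne]
          ring
        have hps : Real.log S * (S⁻¹) ^ M * (S⁻¹) ^ (m+1)
            = Real.log S * (S⁻¹) ^ (M + m + 1) := by
          rw [show M + m + 1 = M + (m+1) from rfl, pow_add]; ring
        have heq : a h M - Real.log S * (S⁻¹) ^ M * ((1 - (S⁻¹) ^ (m+1)) / (S - 1))
            = (a h M - Real.log S * (S⁻¹) ^ M * ((1 - (S⁻¹) ^ m) / (S - 1)))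
              - Real.log S * (S⁻¹) ^ (M + m + 1) := by
          rw [key, ← hps]; ring
        rw [show M + (m+1) = (M + m) + 1 from rfl]
        calc a h M - Real.log S * (S⁻¹) ^ M * ((1 - (S⁻¹) ^ (m+1)) / (S - 1))
            = (a h M - Real.log S * (S⁻¹) ^ M * ((1 - (S⁻¹) ^ m) / (S - 1)))
              - Real.log S * (S⁻¹) ^ (M + m + 1) := heq
          _ ≤ a h (M + m) - Real.log S * (S⁻¹) ^ (M + m + 1) := by linarith
          _ ≤ a h ((M + m) + 1) := step
    have htel' : ∀ m, c ≤ a h (N + m) := by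
      intro m
      refine le_trans ?_ (htel N m)
      have h1 : (1 - (S⁻¹) ^ m) / (S - 1) ≤ 1 / (S - 1) := by
        apply div_le_div_of_nonneg_right ?_ (by linarith)
        have : (0:ℝ) ≤ (S⁻¹) ^ m := by positivity
        linarith
      have hnn : 0 ≤ Real.log S * (S⁻¹) ^ N := by positivity
      have := mul_le_mul_of_nonneg_left h1 hnn
      rw [hc]
      calc a h N - Real.log S * (S⁻¹) ^ N / (S - 1)
          = a h N - Real.log S * (S⁻¹) ^ N * (1 / (S - 1)) := by ring
        _ ≤ a h N - Real.log S * (S⁻¹) ^ N * ((1 - (S⁻¹) ^ m) / (S - 1)) := by linarith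
    have hall : ∀ n, c ≤ a h n := by
      intro n
      rcases le_or_gt N n with hn | hn
      · obtain ⟨m, rfl⟩ := Nat.exists_eq_add_of_le hn
        exact htel' m
      · calc c ≤ a h N := htel' 0 |>.trans_eq (by rw [Nat.add_zero])
          _ ≤ a h n := hanti hn.le
    have : c ≤ ⨅ n, a h n := le_ciInf hall
    linarith
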